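/- The social welfare function on three alternatives {a,b,c} and two voters defined by: society always ranks a above b and a above c, and ranks b above c unless both voters rank c above b, satisfies IIA, has exactly two orders in its range (a≻b≻c and a≻c≻b) at Kendall tau distance 1, and is neither dictatorial nor inversely dictatorial. -/

import Mathlib

/-- A strict linear order on the 3-element set `Fin 3`, encoded as a boolean-valued
relation (`r a b = true` meaning `a` is ranked above `b`). -/
abbrev LO3 := {r : Fin 3 → Fin 3 → Bool // IsStrictTotalOrder (Fin 3) (fun a b => r a b = true)}

lemma LO3.mk_sto (r : Fin 3 → Fin 3 → Bool)
    (h₁ : ∀ a b, r a b = true ∨ a = b ∨ r b a = true)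
    (h₂ : ∀ a, ¬ r a a = true)
    (h₃ : ∀ a b c, r a b = true → r b c = true → r a c = true) :
    IsStrictTotalOrder (Fin 3) (fun a b => r a b = true) := by
  haveI : IsTrichotomous (Fin 3) (fun a b => r a b = true) :=
    ⟨fun a b hab hba => ((h₁ a b).resolve_left hab).resolve_right hba⟩
  haveI : IsIrrefl (Fin 3) (fun a b => r a b = true) := ⟨h₂⟩
  haveI : IsTrans (Fin 3) (fun a b => r a b = true) := ⟨h₃⟩
  haveI : IsStrictOrder (Fin 3) (fun a b => r a b = true) := ⟨⟩
  exact ⟨⟩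

/-- The reverse (inverse) of a strict linear order. -/
def LO3.rev (r : LO3) : LO3 :=
  ⟨fun a b => r.val b a, by
    haveI := r.prop
    exact @IsStrictTotalOrder.swap (Fin 3) (fun a b => r.val a b = true) _⟩

/-- Kendall tau distance: the number of (unordered) pairs on which two orders disagree. -/
def kendall (r s : LO3) : ℕ :=
  (Finset.univ.filter
    (fun p : Fin 3 × Fin 3 => p.1 < p.2 ∧ r.val p.1 p.2 ≠ s.val p.1 p.2)).card

/-- Independence of irrelevant alternatives for a two-voter SWF on `Fin 3`. -/
def IIA2 (W : (Fin 2 → LO3) → LO3) : Prop :=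
  ∀ π π' : Fin 2 → LO3, ∀ a b : Fin 3,
    (∀ v, (π v).val a b = (π' v).val a b) → (W π).val a b = (W π').val a b

/-- Unanimity for a two-voter SWF on `Fin 3`. -/
def Unanimity2 (W : (Fin 2 → LO3) → LO3) : Prop :=
  ∀ π : Fin 2 → LO3, ∀ a b : Fin 3, (∀ v, (π v).val a b = true) → (W π).val a b = true

def Dictatorial (W : (Fin 2 → LO3) → LO3) : Prop := ∃ d, ∀ π, W π = π d

def InverselyDictatorial (W : (Fin 2 → LO3) → LO3) : Prop := ∃ d, ∀ π, W π = (π d).rev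

/-- The order a ≻ b ≻ c on {a,b,c} = {0,1,2}. -/
def ord012 : LO3 :=
  ⟨fun a b => decide (a < b), LO3.mk_sto _ (by decide) (by decide) (by decide)⟩

/-- The order a ≻ c ≻ b on {a,b,c} = {0,1,2}. -/
def ord021 : LO3 :=
  ⟨fun a b => decide ((a = 0 ∧ b ≠ 0) ∨ (a = 2 ∧ b = 1)),
    LO3.mk_sto _ (by decide) (by decide) (by decide)⟩

/-- The SWF that always ranks a above b and a above c, and ranks b above c
unless both voters rank c above b. -/
def W17 (π : Fin 2 → LO3) : LO3 :=
  if (π 0).val 2 1 = true ∧ (π 1).val 2 1 = true then ord021 else ord012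


lemma LO3.flip (r : LO3) {a b : Fin 3} (hab : a ≠ b) : r.val b a = !r.val a b := by
  haveI := r.prop
  cases hv : r.val a b <;> cases hw : r.val b a
  · exfalso
    rcases trichotomous_of (fun x y => r.val x y = true) a b with h | h | h
    · rw [hv] at h; exact absurd h (by simp)
    · exact hab h
    · rw [hw] at h; exact absurd h (by simp)
  · rfl
  · rfl
  · exact absurd (trans_of (fun x y => r.val x y = true) hv hw)
      (fun h => irrefl_of (fun x y => r.val x y = true) a h)

lemma val21_eq {r s : LO3} (h : r.val 1 2 = s.val 1 2) : r.val 2 1 = s.val 2 1 := by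
  rw [LO3.flip r (by decide : (1:Fin 3) ≠ 2), LO3.flip s (by decide : (1:Fin 3) ≠ 2), h]

lemma offpair (a b : Fin 3) (hp : ¬ ((a = 1 ∧ b = 2) ∨ (a = 2 ∧ b = 1))) :
    ord021.val a b = ord012.val a b := by
  revert hp; revert a b; decide

lemma W17_IIA : IIA2 W17 := by
  intro π π' a b h
  by_cases h1 : (π 0).val 2 1 = true ∧ (π 1).val 2 1 = true <;>
    by_cases h2 : (π' 0).val 2 1 = true ∧ (π' 1).val 2 1 = true
  · simp only [W17, if_pos h1, if_pos h2]
  · simp only [W17, if_pos h1, if_neg h2]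
    refine offpair a b ?_
    rintro (⟨rfl, rfl⟩ | ⟨rfl, rfl⟩)
    · exact h2 ⟨by rw [← val21_eq (h 0)]; exact h1.1, by rw [← val21_eq (h 1)]; exact h1.2⟩
    · exact h2 ⟨by rw [← h 0]; exact h1.1, by rw [← h 1]; exact h1.2⟩
  · simp only [W17, if_neg h1, if_pos h2]
    refine (offpair a b ?_).symm
    rintro (⟨rfl, rfl⟩ | ⟨rfl, rfl⟩)
    · exact h1 ⟨by rw [val21_eq (h 0)]; exact h2.1, by rw [val21_eq (h 1)]; exact h2.2⟩
    · exact h1 ⟨by rw [h 0]; exact h2.1, by rw [h 1]; exact h2.2⟩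
  · simp only [W17, if_neg h1, if_neg h2]

/-- The SWF `W17` satisfies IIA, has exactly the two orders a≻b≻c and a≻c≻b in its
range, these are at Kendall tau distance 1, and `W17` is neither dictatorial nor
inversely dictatorial. -/
theorem W17_properties :
    IIA2 W17 ∧
    (∀ π, W17 π = ord012 ∨ W17 π = ord021) ∧
    (∃ π, W17 π = ord012) ∧ (∃ π, W17 π = ord021) ∧
    kendall ord012 ord021 = 1 ∧
    ¬ Dictatorial W17 ∧ ¬ InverselyDictatorial W17 := by
  refine ⟨W17_IIA, ?_, ?_, ?_, ?_, ?_, ?_⟩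
  · intro π
    unfold W17
    split
    · exact Or.inr rfl
    · exact Or.inl rfl
  · exact ⟨fun _ => ord012, by decide⟩
  · exact ⟨fun _ => ord021, by decide⟩
  · decide
  · rintro ⟨d, hd⟩
    exact absurd (hd (fun _ => ord012.rev)) (by decide)
  · rintro ⟨d, hd⟩
    exact absurd (hd (fun _ => ord012.rev)) (by decide)
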